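/- Let R be a reduced Noetherian ring of prime characteristic p whose integral closure R̄ in its total ring of fractions is a finitely generated R-module. Then there exists a power Q of p such that for every x ∈ R outside the union of the minimal primes of R, ((xR)^F)^[Q] = (xR)^[Q], i.e. y ∈ (xR)^F implies y^Q ∈ x^Q R. -/

import Mathlib

set_option synthInstance.maxHeartbeats 1000000

/-- The `q`-th Frobenius power of a set `S`: the ideal generated by `q`-th powers
of elements of `S`. -/
def frobPow {R : Type*} [CommRing R] (S : Set R) (q : ℕ) : Ideal R :=
  Ideal.span ((· ^ q) '' S)

/-- The Frobenius closure of an ideal `I` in a ring of characteristic `p`. -/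
def frobClosure {R : Type*} [CommRing R] (p : ℕ) (I : Ideal R) : Set R :=
  {r | ∃ n : ℕ, r ^ p ^ n ∈ frobPow (I : Set R) (p ^ n)}


set_option maxHeartbeats 1000000

lemma frobPow_span_singleton {R : Type*} [CommRing R] (x : R) (q : ℕ) :
    frobPow ((Ideal.span {x} : Ideal R) : Set R) q = Ideal.span {x ^ q} := by
  apply le_antisymm
  · rw [frobPow, Ideal.span_le]
    rintro _ ⟨a, ha, rfl⟩
    rw [SetLike.mem_coe, Ideal.mem_span_singleton]
    exact pow_dvd_pow_of_dvd (Ideal.mem_span_singleton.mp ha) q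
  · rw [Ideal.span_le, Set.singleton_subset_iff]
    exact Ideal.subset_span ⟨x, Ideal.subset_span rfl, rfl⟩

lemma mem_nonZeroDivisors_of_notMem_minimalPrimes {R : Type*} [CommRing R] [IsReduced R]
    {x : R} (hx : ∀ P ∈ minimalPrimes R, x ∉ P) : x ∈ nonZeroDivisors R := by
  rw [mem_nonZeroDivisors_iff_right]
  intro z hz
  by_contra hz0
  have hnil : sInf (minimalPrimes R) = nilradical R := by
    rw [minimalPrimes, Ideal.sInf_minimalPrimes]
    rfl
  have h : z ∉ nilradical R := fun hh => hz0 (IsNilpotent.eq_zero hh)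
  have hex : ∃ P ∈ minimalPrimes R, z ∉ P := by
    by_contra hc
    push_neg at hc
    exact h (hnil ▸ (Ideal.mem_sInf.mpr fun {P} hP => hc P hP))
  obtain ⟨P, hP, hzP⟩ := hex
  have hPprime : P.IsPrime := hP.1.1
  rcases hPprime.mem_or_mem (show z * x ∈ P by rw [hz]; exact P.zero_mem) with h1 | h1
  · exact hzP h1
  · exact hx P hP h1


/-- if `R` is a reduced Noetherian ring of characteristic `p` whose integral
closure in its total ring of fractions is module-finite over `R`, then there is a power
`Q` of `p` with `((xR)^F)^{[Q]} = (xR)^{[Q]}` for every `x` outside all minimal primes. -/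
theorem uniform_frobenius_closure_principal {R : Type*} [CommRing R] [IsNoetherianRing R]
    [IsReduced R] (p : ℕ) (hp : p.Prime) [CharP R p]
    (hfin : Module.Finite R (integralClosure R (FractionRing R))) :
    ∃ e : ℕ, ∀ x : R, (∀ P ∈ minimalPrimes R, x ∉ P) →
      frobPow (frobClosure p (Ideal.span {x})) (p ^ e) =
        frobPow ((Ideal.span {x} : Ideal R) : Set R) (p ^ e) := by
  classical
  haveI : Fact p.Prime := ⟨hp⟩
  set K := FractionRing R
  set A := integralClosure R K with hA
  haveI : CharP K p := charP_of_injective_ringHom (IsFractionRing.injective R K) p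
  haveI : IsNoetherian R A := isNoetherian_of_isNoetherianRing_of_finite R A
  let M : ℕ →o Submodule R A :=
    ⟨fun n =>
      { carrier := {a | (a : K) ^ p ^ n ∈ (algebraMap R K).range}
        add_mem' := by
          intro a b ha hb
          simp only [Set.mem_setOf_eq] at *
          push_cast
          rw [add_pow_char_pow]
          exact add_mem ha hb
        zero_mem' := by
          simp only [Set.mem_setOf_eq]
          push_cast
          rw [zero_pow (pow_ne_zero _ hp.ne_zero)]
          exact zero_mem _
        smul_mem' := by
          intro r a ha
          simp only [Set.mem_setOf_eq] at *
          have h1 : ((r • a : A) : K) = algebraMap R K r * (a : K) := by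
            simp [Algebra.smul_def]
          rw [h1, mul_pow]
          exact mul_mem ⟨r ^ p ^ n, by rw [map_pow]⟩ ha },
      by
        intro m n hmn a ha
        simp only [Submodule.mem_mk, AddSubmonoid.mem_mk, AddSubsemigroup.mem_mk,
          Set.mem_setOf_eq] at *
        obtain ⟨k, hk⟩ := Nat.exists_eq_add_of_le hmn
        rw [hk, pow_add, pow_mul]
        exact pow_mem ha _⟩
  obtain ⟨e, he⟩ := monotone_stabilizes_iff_noetherian.mpr ‹IsNoetherian R A› M
  refine ⟨e, fun x hx => ?_⟩
  have hxreg : x ∈ nonZeroDivisors R := mem_nonZeroDivisors_of_notMem_minimalPrimes hx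
  have hu : IsUnit (algebraMap R K x) := IsLocalization.map_units K ⟨x, hxreg⟩
  rw [frobPow_span_singleton]
  apply le_antisymm
  · rw [frobPow, Ideal.span_le]
    rintro _ ⟨y, ⟨n, hyn⟩, rfl⟩
    rw [frobPow_span_singleton, Ideal.mem_span_singleton] at hyn
    obtain ⟨r, hr⟩ := hyn
    set z : K := (hu.unit⁻¹ : Kˣ) * algebraMap R K y with hz
    have hzx : z * algebraMap R K x = algebraMap R K y := by
      rw [hz, mul_comm ((hu.unit⁻¹ : Kˣ) : K), mul_assoc, IsUnit.val_inv_mul, mul_one]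
    have hzq : z ^ p ^ n = algebraMap R K r := by
      refine (hu.pow (p ^ n)).mul_left_cancel ?_
      rw [mul_comm, ← mul_pow, hzx, ← map_pow, hr, map_mul, map_pow]
    have hzint : IsIntegral R z := by
      refine ⟨Polynomial.X ^ p ^ n - Polynomial.C r, ?_, ?_⟩
      · exact Polynomial.monic_X_pow_sub_C _ (pow_pos hp.pos n).ne'
      · simp [Polynomial.eval₂_sub, hzq]
    set a : A := ⟨z, hzint⟩ with ha'
    have han : a ∈ M n := by
      show (↑a : K) ^ p ^ n ∈ (algebraMap R K).range
      exact ⟨r, hzq.symm⟩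
    have hae : a ∈ M e := by
      rcases le_total n e with h | h
      · exact M.monotone h han
      · rw [he n h]; exact han
    have hae' : (↑a : K) ^ p ^ e ∈ (algebraMap R K).range := hae
    obtain ⟨s, hs⟩ := RingHom.mem_range.mp hae'
    have hs' : algebraMap R K s = z ^ p ^ e := hs
    rw [SetLike.mem_coe, Ideal.mem_span_singleton]
    refine ⟨s, (IsFractionRing.injective R K) ?_⟩
    rw [map_mul, map_pow, map_pow, ← hzx, mul_pow, hs']
    ring
  · rw [Ideal.span_le, Set.singleton_subset_iff]
    have hxmem : x ∈ frobClosure p (Ideal.span {x}) := by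
      refine ⟨0, ?_⟩
      rw [pow_zero, pow_one, frobPow_span_singleton, pow_one]
      exact Ideal.mem_span_singleton_self x
    exact Ideal.subset_span ⟨x, hxmem, rfl⟩
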